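/- Let W be a finite Coxeter group. Then every modular reflection subgroup of W is a parabolic reflection subgroup of W. -/

import Mathlib

open Module

section Setup

variable {V : Type*} [NormedAddCommGroup V] [InnerProductSpace ℝ V] [FiniteDimensional ℝ V]

/-- The orthogonal reflection `t_α` in the hyperplane orthogonal to `α`. -/
noncomputable def rootReflection (α : V) : V ≃ₗᵢ[ℝ] V := Submodule.reflection (ℝ ∙ α)ᗮ

/-- The absolute length of `w` with respect to a set `T`: the minimum length of a word
for `w` in the alphabet `T`. -/
noncomputable def absLength {G : Type*} [Group G] (T : Set G) (w : G) : ℕ :=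
  sInf {n | ∃ l : List G, (∀ t ∈ l, t ∈ T) ∧ l.prod = w ∧ l.length = n}

/-- The absolute order: `u ≤_T v` iff `ℓ_T(u) + ℓ_T(v u⁻¹) = ℓ_T(v)`. -/
def absLe {G : Type*} [Group G] (T : Set G) (u v : G) : Prop :=
  absLength T u + absLength T (v * u⁻¹) = absLength T v

/-- The fixed space `Fix(w)`. -/
noncomputable def fixSpace (w : V ≃ₗᵢ[ℝ] V) : Submodule ℝ V :=
  LinearMap.ker ((w.toLinearEquiv : V →ₗ[ℝ] V) - LinearMap.id)

/-- The moved space `Mov(w)`, the orthogonal complement of `Fix(w)`. -/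
noncomputable def movSpace (w : V ≃ₗᵢ[ℝ] V) : Submodule ℝ V := (fixSpace w)ᗮ

/-- `V_H`: the span of the roots `α ∈ Φ` with `t_α ∈ H`. -/
noncomputable def rootSpan (Φ : Set V) (H : Subgroup (V ≃ₗᵢ[ℝ] V)) : Submodule ℝ V :=
  Submodule.span ℝ {α | α ∈ Φ ∧ rootReflection α ∈ H}

/-- The geometric lattice `L_W` of subspaces of `V` spanned by subsets of `Φ`. -/
def latticeLW (Φ : Set V) : Set (Submodule ℝ V) :=
  {U | ∃ s ⊆ Φ, U = Submodule.span ℝ s}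

/-- The greatest lower bound of two elements of `L_W` in the lattice `L_W`. -/
noncomputable def latMeet (Φ : Set V) (Y Z : Submodule ℝ V) : Submodule ℝ V :=
  Submodule.span ℝ (Φ ∩ ↑Y ∩ ↑Z)

/-- `Z` is a modular element of the geometric lattice `L_W` (whose rank function is the
dimension, whose meet is `latMeet` and whose join is the join of subspaces). -/
def IsModularFlat (Φ : Set V) (Z : Submodule ℝ V) : Prop :=
  Z ∈ latticeLW Φ ∧ ∀ Y ∈ latticeLW Φ,
    finrank ℝ Y + finrank ℝ Z = finrank ℝ (latMeet Φ Y Z) + finrank ℝ ↥(Y ⊔ Z)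

/-- `H` is a reflection subgroup: a subgroup generated by reflections. -/
def IsReflSubgroup (Φ : Set V) (H : Subgroup (V ≃ₗᵢ[ℝ] V)) : Prop :=
  ∃ R ⊆ rootReflection '' Φ, H = Subgroup.closure R

/-- `H` is parabolic: `t_α ∈ H` for every root `α ∈ Φ ∩ V_H`. -/
def IsParabolicSubgroup (Φ : Set V) (H : Subgroup (V ≃ₗᵢ[ℝ] V)) : Prop :=
  ∀ α ∈ Φ, α ∈ rootSpan Φ H → rootReflection α ∈ H

/-- `H` is a modular subgroup of `K`: every left coset of `H` in `K` has a minimum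
element in the absolute order. -/
def IsModularSubgroupIn {G : Type*} [Group G] (T : Set G) (H K : Subgroup G) : Prop :=
  ∀ k ∈ K, ∃ m : G, k⁻¹ * m ∈ H ∧ ∀ u : G, k⁻¹ * u ∈ H → absLe T m u

/-- The hypotheses that `Φ` is the root system of a finite Coxeter group `W`, realized
via its standard geometric representation:  `Φ` is a finite set of nonzero vectors,
invariant under `W = ⟨t_α : α ∈ Φ⟩`, `W` is finite, and every reflection of `W` (element
whose fixed space is a hyperplane) is of the form `t_α` for some `α ∈ Φ`. -/
structure IsRootSystemOf (Φ : Set V) (W : Subgroup (V ≃ₗᵢ[ℝ] V)) : Prop where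
  closure_eq : W = Subgroup.closure (rootReflection '' Φ)
  finite_roots : Φ.Finite
  ne_zero : ∀ α ∈ Φ, α ≠ 0
  finite_group : Finite W
  invariant : ∀ g ∈ W, ∀ α ∈ Φ, g α ∈ Φ
  refl_mem : ∀ g ∈ W, finrank ℝ (fixSpace g) = finrank ℝ V - 1 → g ∈ rootReflection '' Φ

end Setup

section Aux

set_option linter.unusedSectionVars false

open RealInnerProductSpace

variable {V : Type*} [NormedAddCommGroup V] [InnerProductSpace ℝ V] [FiniteDimensional ℝ V]

lemma rootReflection_apply' (α v : V) :
    rootReflection α v = v - (2 * ⟪α, v⟫ / (‖α‖ ^ 2)) • α := by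
  have hd := (ℝ ∙ α).starProjection_add_starProjection_orthogonal v
  have hs := Submodule.starProjection_singleton (𝕜 := ℝ) (v := α) v
  push_cast at hs
  simp only [RCLike.ofReal_real_eq_id, id_eq] at hs
  have : rootReflection α v = 2 • ((ℝ ∙ α)ᗮ.starProjection v : V) - v :=
    Submodule.reflection_apply v
  rw [this]
  have h2 : ((ℝ ∙ α)ᗮ.starProjection v : V) = v - (⟪α, v⟫ / (‖α‖ ^ 2)) • α := by
    rw [← hs]; linear_combination (norm := module) hd
  rw [h2]
  match_scalars <;> ring

lemma mul_apply' (f g : V ≃ₗᵢ[ℝ] V) (v : V) : (f * g) v = f (g v) := rfl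

lemma rootReflection_apply_self (α : V) (hα : α ≠ 0) : rootReflection α α = -α := by
  rw [rootReflection_apply']
  have h : ⟪α, α⟫ = ‖α‖ ^ 2 := real_inner_self_eq_norm_sq α
  have hn : (‖α‖ : ℝ) ^ 2 ≠ 0 := by
    have : ‖α‖ ≠ 0 := norm_ne_zero_iff.mpr hα
    positivity
  rw [h, mul_div_assoc, div_self hn, mul_one]
  module

lemma rootReflection_apply_orthogonal (α v : V) (h : ⟪α, v⟫ = 0) :
    rootReflection α v = v := by
  rw [rootReflection_apply', h]; simp

lemma rootReflection_inv (α : V) : (rootReflection α)⁻¹ = rootReflection α := rfl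

lemma rootReflection_mul_self (α : V) : rootReflection α * rootReflection α = 1 := by
  rw [← rootReflection_inv]; exact mul_inv_cancel _

lemma rootReflection_smul (α : V) (c : ℝ) (hc : c ≠ 0) :
    rootReflection (c • α) = rootReflection α := by
  unfold rootReflection
  congr 2
  exact Submodule.span_singleton_smul_eq (IsUnit.mk0 c hc) α

lemma rootReflection_conj (g : V ≃ₗᵢ[ℝ] V) (α : V) :
    rootReflection (g α) = g * rootReflection α * g⁻¹ := by
  ext v
  rw [mul_apply', mul_apply']
  rw [rootReflection_apply', rootReflection_apply']
  have h1 : ⟪g α, v⟫ = ⟪α, g⁻¹ v⟫ := by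
    conv_lhs => rw [show v = g (g⁻¹ v) by simp [LinearIsometryEquiv.coe_inv]]
    exact g.inner_map_map α (g⁻¹ v)
  have h2 : ‖g α‖ = ‖α‖ := g.norm_map α
  rw [h1, h2, map_sub, map_smul]
  simp [LinearIsometryEquiv.coe_inv]

lemma mem_fixSpace {w : V ≃ₗᵢ[ℝ] V} {v : V} : v ∈ fixSpace w ↔ w v = v := by
  unfold fixSpace
  rw [LinearMap.mem_ker, LinearMap.sub_apply, LinearMap.id_apply, sub_eq_zero]
  exact Iff.rfl

lemma fixSpace_rootReflection (α : V) (hα : α ≠ 0) :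
    fixSpace (rootReflection α) = (ℝ ∙ α)ᗮ := by
  ext v
  rw [mem_fixSpace, Submodule.mem_orthogonal_singleton_iff_inner_right]
  constructor
  · intro h
    rw [rootReflection_apply'] at h
    have h2 : (2 * ⟪α, v⟫ / ‖α‖ ^ 2) • α = 0 := by
      have := sub_eq_self.mp h
      -- h : v - c • α = v hence c • α = 0? sub_eq_self : a - b = a ↔ b = 0
      exact this
    rcases smul_eq_zero.mp h2 with hc | h0
    · have hn : (‖α‖ : ℝ) ^ 2 ≠ 0 := by
        have : ‖α‖ ≠ 0 := norm_ne_zero_iff.mpr hα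
        positivity
      field_simp at hc
      linarith
    · exact absurd h0 hα
  · intro h; exact rootReflection_apply_orthogonal α v h

lemma fixSpace_one : fixSpace (1 : V ≃ₗᵢ[ℝ] V) = ⊤ := by
  ext v; simp [mem_fixSpace]

lemma eq_one_of_fixSpace_top {w : V ≃ₗᵢ[ℝ] V} (h : fixSpace w = ⊤) : w = 1 := by
  ext v
  have : v ∈ fixSpace w := h ▸ Submodule.mem_top
  rw [mem_fixSpace] at this
  simpa using this

lemma movSpace_eq_bot_iff {w : V ≃ₗᵢ[ℝ] V} : movSpace w = ⊥ ↔ w = 1 := by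
  constructor
  · intro h
    apply eq_one_of_fixSpace_top
    have := congrArg (Submodule.orthogonal) h
    rw [movSpace, Submodule.orthogonal_orthogonal, Submodule.bot_orthogonal_eq_top] at this
    exact this
  · intro h; subst h; rw [movSpace, fixSpace_one, Submodule.top_orthogonal_eq_bot]

lemma fixSpace_eq_orthogonal_movSpace (w : V ≃ₗᵢ[ℝ] V) : (movSpace w)ᗮ = fixSpace w := by
  rw [movSpace, Submodule.orthogonal_orthogonal]

end Aux

section AuxDet

set_option linter.unusedSectionVars false
set_option maxHeartbeats 1000000

open RealInnerProductSpace

variable {V : Type*} [NormedAddCommGroup V] [InnerProductSpace ℝ V] [FiniteDimensional ℝ V]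

/-- determinant of a linear isometry equivalence -/
noncomputable def Det (w : V ≃ₗᵢ[ℝ] V) : ℝ :=
  LinearMap.det ((w.toLinearEquiv : V ≃ₗ[ℝ] V) : V →ₗ[ℝ] V)

lemma Det_mul (u v : V ≃ₗᵢ[ℝ] V) : Det (u * v) = Det u * Det v := by
  unfold Det
  rw [← LinearMap.det_comp]
  rfl

lemma Det_one : Det (1 : V ≃ₗᵢ[ℝ] V) = 1 := by
  unfold Det
  have : (((1 : V ≃ₗᵢ[ℝ] V).toLinearEquiv : V ≃ₗ[ℝ] V) : V →ₗ[ℝ] V) = LinearMap.id := by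
    ext x; rfl
  rw [this, LinearMap.det_id]

lemma Det_ne_zero (w : V ≃ₗᵢ[ℝ] V) : Det w ≠ 0 := by
  intro h
  have h2 : Det w * Det w⁻¹ = Det (1 : V ≃ₗᵢ[ℝ] V) := by
    rw [← Det_mul, mul_inv_cancel w]
  rw [h, zero_mul, Det_one] at h2
  exact one_ne_zero h2.symm

lemma Det_rootReflection (γ : V) (hγ : γ ≠ 0) : Det (rootReflection γ) = -1 := by
  classical
  set K := (ℝ ∙ γ) with hK
  have hnorm : ‖γ‖ ≠ 0 := norm_ne_zero_iff.mpr hγ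
  set g : V := ‖γ‖⁻¹ • γ with hg
  have hg1 : ‖g‖ = 1 := by
    rw [hg, norm_smul]
    simp [abs_of_nonneg (inv_nonneg.mpr (norm_nonneg γ)), inv_mul_cancel₀ hnorm]
  have hrefl_g : rootReflection γ g = -g := by
    rw [hg, map_smul, rootReflection_apply_self γ hγ]
    module
  let m := finrank ℝ Kᗮ
  let bO : OrthonormalBasis (Fin m) ℝ Kᗮ := stdOrthonormalBasis ℝ Kᗮ
  let f : Unit ⊕ Fin m → V := Sum.elim (fun _ => g) (fun i => (bO i : V))
  have horth : Orthonormal ℝ f := by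
    rw [orthonormal_iff_ite]
    intro i j
    rcases i with i | i <;> rcases j with j | j
    · simp only [f, Sum.elim_inl]
      rw [real_inner_self_eq_norm_sq, hg1]
      simp
    · simp only [f, Sum.elim_inl, Sum.elim_inr]
      have : ((bO j : V)) ∈ Kᗮ := (bO j).2
      have h0 : ⟪γ, (bO j : V)⟫ = 0 :=
        Submodule.mem_orthogonal_singleton_iff_inner_right.mp this
      have : ⟪g, (bO j : V)⟫ = 0 := by
        rw [hg, inner_smul_left]
        simp [h0]
      simp [this]
    · simp only [f, Sum.elim_inl, Sum.elim_inr]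
      have : ((bO i : V)) ∈ Kᗮ := (bO i).2
      have h0 : ⟪γ, (bO i : V)⟫ = 0 :=
        Submodule.mem_orthogonal_singleton_iff_inner_right.mp this
      have h1 : ⟪(bO i : V), g⟫ = 0 := by
        rw [real_inner_comm, hg, inner_smul_left]
        simp [h0]
      simp [h1]
    · have horth' := bO.orthonormal
      rw [orthonormal_iff_ite] at horth'
      have h2 := horth' i j
      simp only [f, Sum.elim_inr]
      have h3 : ⟪(bO i : V), (bO j : V)⟫ = (if i = j then (1:ℝ) else 0) := by
        rw [← Kᗮ.coe_inner (bO i) (bO j)]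
        exact h2
      rw [h3]
      by_cases hij : i = j <;> simp [hij]
  have hspan : ⊤ ≤ Submodule.span ℝ (Set.range f) := by
    intro v _
    have hd : (Submodule.orthogonalProjection K v : V) + (Submodule.orthogonalProjection Kᗮ v : V) = v :=
      K.starProjection_add_starProjection_orthogonal v
    have h1 : (Submodule.orthogonalProjection K v : V) ∈ Submodule.span ℝ (Set.range f) := by
      have hmem : (Submodule.orthogonalProjection K v : V) ∈ K := (Submodule.orthogonalProjection K v).2
      obtain ⟨c, hc⟩ := Submodule.mem_span_singleton.mp hmem
      have hγg : γ = ‖γ‖ • g := by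
        rw [hg, smul_smul, mul_inv_cancel₀ hnorm, one_smul]
      have heq : (Submodule.orthogonalProjection K v : V) = (c * ‖γ‖) • g := by
        rw [← hc]
        conv_lhs => rw [hγg]
        rw [smul_smul]
      rw [heq]
      exact Submodule.smul_mem _ _ (Submodule.subset_span ⟨Sum.inl (), rfl⟩)
    have h2 : (Submodule.orthogonalProjection Kᗮ v : V) ∈ Submodule.span ℝ (Set.range f) := by
      have hmem : (Submodule.orthogonalProjection Kᗮ v) ∈ (⊤ : Submodule ℝ Kᗮ) := Submodule.mem_top
      rw [← bO.toBasis.span_eq, OrthonormalBasis.coe_toBasis] at hmem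
      have himg := Submodule.mem_map_of_mem (f := Kᗮ.subtype) hmem
      rw [Submodule.map_span] at himg
      refine Submodule.span_mono ?_ himg
      rintro u ⟨u', ⟨i, rfl⟩, rfl⟩
      exact ⟨Sum.inr i, rfl⟩
    rw [← hd]
    exact Submodule.add_mem _ h1 h2
  let b : Basis (Unit ⊕ Fin m) ℝ V := Basis.mk horth.linearIndependent hspan
  have hb : ∀ i, b i = f i := fun i => Basis.mk_apply _ _ i
  set T : V →ₗ[ℝ] V := (((rootReflection γ).toLinearEquiv : V ≃ₗ[ℝ] V) : V →ₗ[ℝ] V) with hT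
  have hTapp : ∀ v : V, T v = rootReflection γ v := fun v => rfl
  have hmat : LinearMap.toMatrix b b T
      = Matrix.diagonal (Sum.elim (fun _ => (-1 : ℝ)) (fun _ => 1)) := by
    ext i j
    rw [LinearMap.toMatrix_apply]
    rcases j with j | j
    · rw [hb]
      simp only [f, Sum.elim_inl]
      rw [hTapp, hrefl_g]
      have : -g = -(b (Sum.inl ())) := by rw [hb]; rfl
      rw [this, map_neg, Basis.repr_self]
      rcases i with i | i
      · simp [Matrix.diagonal]
      · simp [Matrix.diagonal, Finsupp.single_apply]
    · rw [hb]
      simp only [f, Sum.elim_inr]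
      rw [hTapp]
      have hfix : rootReflection γ (bO j : V) = (bO j : V) := by
        apply rootReflection_apply_orthogonal
        exact Submodule.mem_orthogonal_singleton_iff_inner_right.mp (bO j).2
      rw [hfix]
      have : ((bO j : V)) = b (Sum.inr j) := by rw [hb]; rfl
      rw [this, Basis.repr_self]
      rcases i with i | i
      · simp [Matrix.diagonal, Finsupp.single_apply]
      · by_cases hij : i = j
        · subst hij; simp [Matrix.diagonal]
        · simp [Matrix.diagonal, Finsupp.single_apply, hij, Ne.symm hij]
  have : LinearMap.det T = -1 := by
    rw [← LinearMap.det_toMatrix b, hmat, Matrix.det_diagonal]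
    rw [Fintype.prod_sum_type]
    simp
  exact this

end AuxDet

section AuxP1

set_option linter.unusedSectionVars false
set_option maxHeartbeats 1000000

open RealInnerProductSpace

variable {V : Type*} [NormedAddCommGroup V] [InnerProductSpace ℝ V] [FiniteDimensional ℝ V]

lemma finrank_fixSpace_add_movSpace (w : V ≃ₗᵢ[ℝ] V) :
    finrank ℝ (fixSpace w) + finrank ℝ (movSpace w) = finrank ℝ V :=
  Submodule.finrank_add_finrank_orthogonal _

lemma Det_eq_neg_one_pow (w : V ≃ₗᵢ[ℝ] V) :
    Det w = (-1 : ℝ) ^ (finrank ℝ (movSpace w)) := by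
  suffices H : ∀ n : ℕ, ∀ w : V ≃ₗᵢ[ℝ] V, finrank ℝ (movSpace w) = n → Det w = (-1:ℝ)^n from
    H _ w rfl
  intro n
  induction n using Nat.strong_induction_on with
  | _ n ih =>
  intro w hw
  by_cases hw1 : w = 1
  · subst hw1
    have hbot : movSpace (1 : V ≃ₗᵢ[ℝ] V) = ⊥ := movSpace_eq_bot_iff.mpr rfl
    rw [hbot, finrank_bot] at hw
    rw [Det_one, ← hw, pow_zero]
  · have hv : ∃ v : V, w v ≠ v := by
      by_contra hno
      push_neg at hno
      exact hw1 (by ext v; simpa using hno v)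
    obtain ⟨v, hv⟩ := hv
    set γ := w v - v with hγdef
    have hγ : γ ≠ 0 := sub_ne_zero.mpr hv
    set s := rootReflection γ with hs
    have hAC : ⟪w v, w v⟫ = ⟪v, v⟫ := by
      rw [real_inner_self_eq_norm_sq, real_inner_self_eq_norm_sq, w.norm_map]
    have hnormγ : ‖γ‖ ^ 2 = 2 * (⟪v,v⟫ - ⟪v, w v⟫) := by
      rw [← real_inner_self_eq_norm_sq, hγdef]
      rw [inner_sub_left, inner_sub_right, inner_sub_right, hAC]
      rw [real_inner_comm (w v) v]
      ring
    have hγwv : ⟪γ, w v⟫ = ⟪v,v⟫ - ⟪v, w v⟫ := by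
      rw [hγdef, inner_sub_left, hAC, real_inner_comm (w v) v]
    have hswv : s (w v) = v := by
      rw [hs, rootReflection_apply', hγwv, hnormγ]
      have hne : (2:ℝ) * (⟪v,v⟫ - ⟪v, w v⟫) ≠ 0 := by
        rw [← hnormγ]
        have h0 : ‖γ‖ ≠ 0 := norm_ne_zero_iff.mpr hγ
        positivity
      rw [show (2:ℝ) * (⟪v,v⟫ - ⟪v, w v⟫) / (2 * (⟪v,v⟫ - ⟪v, w v⟫)) = 1 from div_self hne]
      rw [one_smul, hγdef]
      abel
    have hfix_sub : fixSpace w ≤ fixSpace (s * w) := by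
      intro u hu
      rw [mem_fixSpace] at hu ⊢
      rw [mul_apply', hu]
      apply rootReflection_apply_orthogonal
      rw [hγdef, inner_sub_left]
      have huv : ⟪w v, u⟫ = ⟪v, u⟫ := by
        conv_lhs => rw [← hu]
        exact w.inner_map_map v u
      rw [huv]; ring
    have hvmem : v ∈ fixSpace (s * w) := by
      rw [mem_fixSpace, mul_apply', hswv]
    have hvnot : v ∉ fixSpace w := by rw [mem_fixSpace]; exact hv
    have hlt : fixSpace w < fixSpace (s * w) :=
      lt_of_le_of_ne hfix_sub (fun he => hvnot (he ▸ hvmem))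
    have hfr_lt : finrank ℝ (fixSpace w) < finrank ℝ (fixSpace (s*w)) :=
      Submodule.finrank_lt_finrank_of_lt hlt
    have hinter : fixSpace (s * w) ⊓ (ℝ ∙ γ)ᗮ ≤ fixSpace w := by
      intro u hu
      rw [Submodule.mem_inf] at hu
      obtain ⟨h1, h2⟩ := hu
      rw [mem_fixSpace] at h1 ⊢
      have hsu : s u = u := rootReflection_apply_orthogonal γ u
        (Submodule.mem_orthogonal_singleton_iff_inner_right.mp h2)
      have hss : s (s (w u)) = w u := by
        rw [← mul_apply' s s, rootReflection_mul_self]; rfl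
      calc w u = s (s (w u)) := hss.symm
        _ = s u := by rw [show s (w u) = (s * w) u from rfl, h1]
        _ = u := hsu
    have hdim1 : finrank ℝ (ℝ ∙ γ) = 1 := finrank_span_singleton hγ
    have horthd : finrank ℝ (ℝ ∙ γ) + finrank ℝ ((ℝ ∙ γ)ᗮ) = finrank ℝ V :=
      Submodule.finrank_add_finrank_orthogonal _
    have hsup := Submodule.finrank_sup_add_finrank_inf_eq (fixSpace (s*w)) ((ℝ ∙ γ)ᗮ)
    have hsup_le : finrank ℝ ↥((fixSpace (s*w)) ⊔ (ℝ ∙ γ)ᗮ) ≤ finrank ℝ V :=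
      Submodule.finrank_le _
    have hinf_le : finrank ℝ ↥(fixSpace (s*w) ⊓ (ℝ ∙ γ)ᗮ) ≤ finrank ℝ (fixSpace w) :=
      Submodule.finrank_mono hinter
    have e1 := finrank_fixSpace_add_movSpace w
    have e2 := finrank_fixSpace_add_movSpace (s * w)
    have hmov' : finrank ℝ (movSpace (s * w)) + 1 = n := by omega
    have hdet' := ih (finrank ℝ (movSpace (s*w))) (by omega) (s*w) rfl
    have hid : s * (s * w) = w := by
      rw [← mul_assoc, hs, rootReflection_mul_self, one_mul]
    calc Det w = Det (s * (s * w)) := by rw [hid]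
      _ = Det s * Det (s * w) := Det_mul _ _
      _ = (-1) * (-1) ^ (finrank ℝ (movSpace (s*w))) := by
          rw [hs, Det_rootReflection γ hγ, hdet']
      _ = (-1 : ℝ) ^ n := by rw [← hmov', pow_succ]; ring

lemma finrank_movSpace_reflection_mul_lt (α : V) (hα : α ≠ 0) (w : V ≃ₗᵢ[ℝ] V)
    (hmem : α ∈ movSpace w) :
    finrank ℝ (movSpace (rootReflection α * w)) < finrank ℝ (movSpace w) := by
  have hle : fixSpace w ≤ fixSpace (rootReflection α * w) := by
    intro u hu
    have hu' := hu
    rw [mem_fixSpace] at hu' ⊢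
    rw [mul_apply', hu']
    apply rootReflection_apply_orthogonal
    have h0 : ⟪u, α⟫ = 0 := ((fixSpace w).mem_orthogonal α).mp hmem u hu
    rw [real_inner_comm]; exact h0
  have hne : fixSpace w ≠ fixSpace (rootReflection α * w) := by
    intro he
    have h1 : movSpace w = movSpace (rootReflection α * w) := by
      rw [movSpace, movSpace, he]
    have h2 := Det_eq_neg_one_pow w
    have h3 := Det_eq_neg_one_pow (rootReflection α * w)
    rw [← h1, Det_mul, Det_rootReflection α hα, h2] at h3
    have : Det w = 0 := by
      rw [h2]; linarith [h3]
    exact Det_ne_zero w this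
  have hlt : fixSpace w < fixSpace (rootReflection α * w) := lt_of_le_of_ne hle hne
  have hfr := Submodule.finrank_lt_finrank_of_lt hlt
  have e1 := finrank_fixSpace_add_movSpace w
  have e2 := finrank_fixSpace_add_movSpace (rootReflection α * w)
  omega

end AuxP1

section Aux2

set_option linter.unusedSectionVars false
set_option maxHeartbeats 1000000

open RealInnerProductSpace

variable {V : Type*} [NormedAddCommGroup V] [InnerProductSpace ℝ V] [FiniteDimensional ℝ V]

lemma mem_orthogonal_span_iff (S : Set V) (v : V) :
    v ∈ (Submodule.span ℝ S)ᗮ ↔ ∀ u ∈ S, ⟪u, v⟫ = 0 := by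
  constructor
  · intro h u hu
    exact h u (Submodule.subset_span hu)
  · intro h u hu
    induction hu using Submodule.span_induction with
    | mem u hu => exact h u hu
    | zero => simp
    | add a b _ _ ha hb => rw [inner_add_left, ha, hb, add_zero]
    | smul c a _ ha => rw [inner_smul_left, ha, mul_zero]

lemma prod_map_apply_sub_mem_span (l : List V) (v : V) :
    (l.map rootReflection).prod v - v ∈ Submodule.span ℝ {u | u ∈ l} := by
  induction l with
  | nil => simp
  | cons a l ih =>
    have hmono : Submodule.span ℝ {u | u ∈ l} ≤ Submodule.span ℝ {u | u ∈ a :: l} :=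
      Submodule.span_mono (fun u hu => by simp [Set.mem_setOf_eq] at hu ⊢; exact Or.inr hu)
    have ha : a ∈ Submodule.span ℝ {u | u ∈ a :: l} :=
      Submodule.subset_span (by simp)
    have h1 : (List.map rootReflection (a :: l)).prod v
        = rootReflection a ((List.map rootReflection l).prod v) := by
      simp [mul_apply']
    rw [h1, rootReflection_apply']
    have : (List.map rootReflection l).prod v
        - (2 * ⟪a, (List.map rootReflection l).prod v⟫ / ‖a‖ ^ 2) • a - v
        = ((List.map rootReflection l).prod v - v)
          + (-(2 * ⟪a, (List.map rootReflection l).prod v⟫ / ‖a‖ ^ 2)) • a := by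
      module
    rw [this]
    exact Submodule.add_mem _ (hmono ih) (Submodule.smul_mem _ _ ha)

lemma orthogonal_span_le_fixSpace_prod (l : List V) :
    (Submodule.span ℝ {u | u ∈ l})ᗮ ≤ fixSpace (l.map rootReflection).prod := by
  intro v hv
  rw [mem_fixSpace]
  induction l with
  | nil => simp
  | cons a l ih =>
    have hv' : v ∈ (Submodule.span ℝ {u | u ∈ l})ᗮ := by
      rw [mem_orthogonal_span_iff] at hv ⊢
      intro u hu
      exact hv u (by simp only [Set.mem_setOf_eq, List.mem_cons]; exact Or.inr hu)
    have h1 : (List.map rootReflection (a :: l)).prod v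
        = rootReflection a ((List.map rootReflection l).prod v) := by
      simp [mul_apply']
    rw [h1, ih hv']
    apply rootReflection_apply_orthogonal
    rw [mem_orthogonal_span_iff] at hv
    exact hv a (by simp)

/-- an inductively independent list -/
def Ind : List V → Prop
  | [] => True
  | a :: l => a ∉ Submodule.span ℝ {u | u ∈ l} ∧ Ind l

lemma fixSpace_prod_of_ind (l : List V) (h : Ind l) (h0 : ∀ u ∈ l, u ≠ (0:V)) :
    fixSpace (l.map rootReflection).prod = (Submodule.span ℝ {u | u ∈ l})ᗮ := by
  apply le_antisymm _ (orthogonal_span_le_fixSpace_prod l)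
  induction l with
  | nil =>
    intro v _
    rw [mem_orthogonal_span_iff]; intro u hu; simp at hu
  | cons a l ih =>
    intro v hv
    rw [mem_fixSpace] at hv
    have h1 : (List.map rootReflection (a :: l)).prod v
        = rootReflection a ((List.map rootReflection l).prod v) := by
      simp [mul_apply']
    rw [h1] at hv
    set P := (List.map rootReflection l).prod v with hP
    have h2 : P = rootReflection a v := by
      have := congrArg (rootReflection a) hv
      rwa [← mul_apply', rootReflection_mul_self] at this
    have ha0 : a ≠ 0 := h0 a (by simp)
    rw [rootReflection_apply'] at h2
    have h3 : P - v = (-(2 * ⟪a, v⟫ / ‖a‖ ^ 2)) • a := by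
      rw [h2]; module
    have h4 : P - v ∈ Submodule.span ℝ {u | u ∈ l} := prod_map_apply_sub_mem_span l v
    rw [h3] at h4
    have hc : (2 * ⟪a, v⟫ / ‖a‖ ^ 2) = 0 := by
      by_contra hc
      have : a ∈ Submodule.span ℝ {u | u ∈ l} := by
        have := Submodule.smul_mem _ (-(2 * ⟪a, v⟫ / ‖a‖ ^ 2))⁻¹ h4
        rwa [smul_smul, inv_mul_cancel₀ (by simpa using hc), one_smul] at this
      exact h.1 this
    have hav : ⟪a, v⟫ = 0 := by
      have hn : (‖a‖ : ℝ) ^ 2 ≠ 0 := by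
        have : ‖a‖ ≠ 0 := norm_ne_zero_iff.mpr ha0
        positivity
      field_simp at hc
      linarith
    have h5 : P = v := by rw [h2, hav]; simp
    have h6 : v ∈ (Submodule.span ℝ {u | u ∈ l})ᗮ := by
      have := ih h.2 (fun u hu => h0 u (by simp [hu]))
      exact this (by rw [mem_fixSpace]; exact h5)
    rw [mem_orthogonal_span_iff]
    intro u hu
    simp only [Set.mem_setOf_eq, List.mem_cons] at hu
    rcases hu with rfl | hu
    · exact hav
    · rw [mem_orthogonal_span_iff] at h6; exact h6 u hu

lemma span_list_cons (a : V) (l : List V) :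
    Submodule.span ℝ {u | u ∈ a :: l} = (ℝ ∙ a) ⊔ Submodule.span ℝ {u | u ∈ l} := by
  have : {u | u ∈ a :: l} = insert a {u | u ∈ l} := by
    ext u; simp
  rw [this, Submodule.span_insert]

lemma finrank_span_list_le (l : List V) :
    finrank ℝ (Submodule.span ℝ {u | u ∈ l}) ≤ l.length := by
  induction l with
  | nil =>
    have : {u | u ∈ ([] : List V)} = (∅ : Set V) := by ext u; simp
    rw [this, Submodule.span_empty]
    simp
  | cons a l ih =>
    rw [span_list_cons]
    have h1 := Submodule.finrank_sup_add_finrank_inf_eq (ℝ ∙ a) (Submodule.span ℝ {u | u ∈ l})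
    have h2 : finrank ℝ (ℝ ∙ a) ≤ 1 := by
      by_cases ha : a = 0
      · subst ha; rw [Submodule.span_zero_singleton]; simp
      · rw [finrank_span_singleton ha]
    simp only [List.length_cons]
    omega

lemma finrank_span_of_ind (l : List V) (h : Ind l) :
    finrank ℝ (Submodule.span ℝ {u | u ∈ l}) = l.length := by
  induction l with
  | nil =>
    have : {u | u ∈ ([] : List V)} = (∅ : Set V) := by ext u; simp
    rw [this, Submodule.span_empty]
    simp
  | cons a l ih =>
    have ha0 : a ≠ 0 := by
      intro h0
      exact h.1 (h0 ▸ Submodule.zero_mem _)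
    rw [span_list_cons]
    have h1 := Submodule.finrank_sup_add_finrank_inf_eq (ℝ ∙ a) (Submodule.span ℝ {u | u ∈ l})
    have h2 : (ℝ ∙ a) ⊓ Submodule.span ℝ {u | u ∈ l} = ⊥ := by
      rw [Submodule.eq_bot_iff]
      intro x hx
      rw [Submodule.mem_inf] at hx
      obtain ⟨hx1, hx2⟩ := hx
      rw [Submodule.mem_span_singleton] at hx1
      obtain ⟨c, rfl⟩ := hx1
      by_cases hc : c = 0
      · rw [hc, zero_smul]
      · exfalso
        apply h.1
        have := Submodule.smul_mem _ c⁻¹ hx2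
        rwa [smul_smul, inv_mul_cancel₀ hc, one_smul] at this
    rw [h2, finrank_bot, add_zero, finrank_span_singleton ha0, ih h.2] at h1
    simp only [List.length_cons]
    omega

end Aux2


section AuxCone

set_option linter.unusedSectionVars false
set_option maxHeartbeats 1000000

open RealInnerProductSpace Finset

variable {V : Type*} [NormedAddCommGroup V] [InnerProductSpace ℝ V] [FiniteDimensional ℝ V]

/-- membership in the convex cone generated by a finite set -/
def coneF (S : Finset V) (v : V) : Prop :=
  ∃ c : V → ℝ, (∀ u ∈ S, 0 ≤ c u) ∧ v = S.sum (fun u => c u • u)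

lemma coneF_of_mem {S : Finset V} {β : V} (hβ : β ∈ S) : coneF S β := by
  classical
  refine ⟨fun u => if u = β then 1 else 0, ?_, ?_⟩
  · intro u _
    dsimp only
    split <;> norm_num
  · have : ∀ u ∈ S, (if u = β then (1:ℝ) else 0) • u = (if u = β then u else 0) := by
      intro u _; split <;> simp
    rw [Finset.sum_congr rfl this, Finset.sum_ite_eq' S β (fun u => u), if_pos hβ]

lemma coneF_trans {S S' : Finset V} (hS : ∀ u ∈ S, coneF S' u) {v : V} (hv : coneF S v) :
    coneF S' v := by
  classical
  obtain ⟨c, hc, hsum⟩ := hv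
  choose! d hd hdsum using hS
  refine ⟨fun z => ∑ u ∈ S, c u * d u z, ?_, ?_⟩
  · intro z hz
    apply Finset.sum_nonneg
    intro u hu
    exact mul_nonneg (hc u hu) (hd u hu z hz)
  · rw [hsum]
    have h1 : ∀ u ∈ S, c u • u = ∑ z ∈ S', (c u * d u z) • z := by
      intro u hu
      have h2 : c u • (∑ z ∈ S', d u z • z) = ∑ z ∈ S', (c u * d u z) • z := by
        rw [Finset.smul_sum]
        exact Finset.sum_congr rfl fun z _ => smul_smul _ _ _
      rw [← h2, ← hdsum u hu]
    rw [Finset.sum_congr rfl h1, Finset.sum_comm]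
    apply Finset.sum_congr rfl
    intro z _
    rw [Finset.sum_smul]

lemma coneF_inner_nonneg {S : Finset V} {v : V} (x : V) (hv : coneF S v)
    (hS : ∀ u ∈ S, 0 ≤ ⟪x, u⟫) : 0 ≤ ⟪x, v⟫ := by
  obtain ⟨c, hc, hsum⟩ := hv
  rw [hsum, inner_sum]
  apply Finset.sum_nonneg
  intro u hu
  rw [real_inner_smul_right]
  exact mul_nonneg (hc u hu) (hS u hu)

end AuxCone

section AuxSimpleSystem

set_option linter.unusedSectionVars false
set_option maxHeartbeats 1000000

open RealInnerProductSpace Finset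

variable {V : Type*} [NormedAddCommGroup V] [InnerProductSpace ℝ V] [FiniteDimensional ℝ V]
variable {Φ : Set V} {x : V}

lemma rootReflection_mem_closure {α : V} (hα : α ∈ Φ) :
    rootReflection α ∈ Subgroup.closure (rootReflection '' Φ) :=
  Subgroup.subset_closure ⟨α, hα, rfl⟩

lemma neg_mem_roots (hnz : ∀ α ∈ Φ, α ≠ 0)
    (hinv : ∀ g ∈ Subgroup.closure (rootReflection '' Φ), ∀ α ∈ Φ, g α ∈ Φ)
    {β : V} (hβ : β ∈ Φ) : -β ∈ Φ := by
  have h := hinv (rootReflection β) (rootReflection_mem_closure hβ) β hβ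
  rwa [rootReflection_apply_self β (hnz β hβ)] at h

lemma exists_simple_system (hfin : Φ.Finite) (hnz : ∀ α ∈ Φ, α ≠ 0)
    (hinv : ∀ g ∈ Subgroup.closure (rootReflection '' Φ), ∀ α ∈ Φ, g α ∈ Φ)
    (hx : ∀ α ∈ Φ, ⟪x, α⟫ ≠ 0) :
    ∃ Δ : Finset V,
      (∀ δ ∈ Δ, δ ∈ Φ ∧ 0 < ⟪x, δ⟫) ∧
      (∀ β ∈ Φ, 0 < ⟪x, β⟫ → coneF Δ β) ∧
      (∀ a : V → ℝ, (∑ u ∈ Δ, a u • u) = 0 → ∀ u ∈ Δ, a u = 0) := by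
  classical
  set P₀ : Finset V := hfin.toFinset.filter (fun α => 0 < ⟪x, α⟫) with hP₀
  have hQP₀ : (∀ δ ∈ P₀, δ ∈ Φ ∧ 0 < ⟪x, δ⟫) ∧ (∀ β ∈ Φ, 0 < ⟪x, β⟫ → coneF P₀ β) := by
    constructor
    · intro δ hδ
      rw [hP₀, Finset.mem_filter, Set.Finite.mem_toFinset] at hδ
      exact hδ
    · intro β hβ hpos
      apply coneF_of_mem
      rw [hP₀, Finset.mem_filter, Set.Finite.mem_toFinset]
      exact ⟨hβ, hpos⟩
  set Ns : Set ℕ := {n | ∃ T : Finset V,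
      ((∀ δ ∈ T, δ ∈ Φ ∧ 0 < ⟪x, δ⟫) ∧ (∀ β ∈ Φ, 0 < ⟪x, β⟫ → coneF T β)) ∧ T.card = n}
    with hNs
  have hne : Ns.Nonempty := ⟨P₀.card, P₀, hQP₀, rfl⟩
  obtain ⟨S, hQS, hcard⟩ := Nat.sInf_mem hne
  have hmin : ∀ β ∈ S, ¬ coneF (S.erase β) β := by
    intro β hβ hcone
    have hQ' : (∀ δ ∈ S.erase β, δ ∈ Φ ∧ 0 < ⟪x, δ⟫) ∧
        (∀ β' ∈ Φ, 0 < ⟪x, β'⟫ → coneF (S.erase β) β') := by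
      constructor
      · intro δ hδ; exact hQS.1 δ (Finset.mem_of_mem_erase hδ)
      · intro β' hβ' hpos'
        apply coneF_trans (S := S) _ (hQS.2 β' hβ' hpos')
        intro u hu
        by_cases h : u = β
        · subst h; exact hcone
        · exact coneF_of_mem (Finset.mem_erase.mpr ⟨h, hu⟩)
    have hmem : (S.erase β).card ∈ Ns := ⟨_, hQ', rfl⟩
    have hlt : (S.erase β).card < S.card := Finset.card_erase_lt_of_mem hβ
    have := Nat.sInf_le hmem
    omega
  -- obtuseness
  have hobt : ∀ α ∈ S, ∀ β ∈ S, α ≠ β → ⟪α, β⟫ ≤ 0 := by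
    intro α hαS β hβS hne0
    by_contra hpos0
    push_neg at hpos0
    obtain ⟨hαΦ, hαx⟩ := hQS.1 α hαS
    obtain ⟨hβΦ, hβx⟩ := hQS.1 β hβS
    have hα0 : α ≠ 0 := hnz α hαΦ
    have hnα : (0:ℝ) < ‖α‖ ^ 2 := by
      have h := norm_ne_zero_iff.mpr hα0
      positivity
    set c : ℝ := 2 * ⟪α, β⟫ / ‖α‖ ^ 2 with hc
    have hcpos : 0 < c := by rw [hc]; positivity
    set γ : V := rootReflection α β with hγ
    have hγΦ : γ ∈ Φ := hinv _ (rootReflection_mem_closure hαΦ) β hβΦ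
    have hγval : γ = β - c • α := by rw [hγ, rootReflection_apply' α β]
    have hαerase : α ∈ S.erase β := Finset.mem_erase.mpr ⟨hne0, hαS⟩
    have hβerase : β ∈ S.erase α := Finset.mem_erase.mpr ⟨fun h => hne0 h.symm, hβS⟩
    rcases lt_or_gt_of_ne (hx γ hγΦ) with hγneg | hγpos
    · -- -γ is a positive root
      have hγ'Φ : -γ ∈ Φ := neg_mem_roots hnz hinv hγΦ
      have hγ'pos : 0 < ⟪x, -γ⟫ := by rw [inner_neg_right]; linarith
      obtain ⟨e, he0, hesum⟩ := hQS.2 (-γ) hγ'Φ hγ'pos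
      have hsplit : ∑ u ∈ S, e u • u = e α • α + ∑ u ∈ S.erase α, e u • u :=
        (Finset.add_sum_erase S _ hαS).symm
      have h1 : c • α - β = e α • α + ∑ u ∈ S.erase α, e u • u := by
        have h2 : -γ = c • α - β := by rw [hγval]; module
        rw [← h2]; exact hesum.trans hsplit
      have hkey : (c - e α) • α = β + ∑ u ∈ S.erase α, e u • u := by
        linear_combination (norm := module) h1
      by_cases heα : e α < c
      · apply hmin α hαS
        have hne1 : c - e α ≠ 0 := by linarith
        have hinvpos : (0:ℝ) ≤ (c - e α)⁻¹ := le_of_lt (inv_pos.mpr (by linarith))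
        refine ⟨fun u => (c - e α)⁻¹ * (e u + if u = β then 1 else 0), ?_, ?_⟩
        · intro u hu
          apply mul_nonneg hinvpos
          have h3 := he0 u (Finset.mem_of_mem_erase hu)
          have : (0:ℝ) ≤ (if u = β then (1:ℝ) else 0) := by split <;> norm_num
          linarith
        · have h5 : ∀ u ∈ S.erase α, ((c - e α)⁻¹ * (e u + if u = β then 1 else 0)) • u
              = (c - e α)⁻¹ • (e u • u + (if u = β then (1:ℝ) • u else 0)) := by
            intro u _
            by_cases h : u = β
            · rw [if_pos h, if_pos h, ← add_smul, smul_smul]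
            · rw [if_neg h, if_neg h, add_zero, add_zero, smul_smul]
          rw [Finset.sum_congr rfl h5, ← Finset.smul_sum, Finset.sum_add_distrib,
              Finset.sum_ite_eq' _ β _, if_pos hβerase, one_smul,
              add_comm (∑ u ∈ S.erase α, e u • u) β, ← hkey, smul_smul,
              inv_mul_cancel₀ hne1, one_smul]
      · push_neg at heα
        have hpair := congrArg (fun v => ⟪x, v⟫) hkey
        simp only [real_inner_smul_right, inner_add_right, inner_sum] at hpair
        have hsum0 : 0 ≤ ∑ u ∈ S.erase α, e u * ⟪x, u⟫ := by
          apply Finset.sum_nonneg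
          intro u hu
          exact mul_nonneg (he0 _ (Finset.mem_of_mem_erase hu))
            (le_of_lt (hQS.1 u (Finset.mem_of_mem_erase hu)).2)
        have h6 : (c - e α) * ⟪x, α⟫ ≤ 0 := by nlinarith
        linarith
    · -- γ is a positive root
      obtain ⟨e, he0, hesum⟩ := hQS.2 γ hγΦ hγpos
      have hsplit : ∑ u ∈ S, e u • u = e β • β + ∑ u ∈ S.erase β, e u • u :=
        (Finset.add_sum_erase S _ hβS).symm
      have h1 : β - c • α = e β • β + ∑ u ∈ S.erase β, e u • u := by
        rw [← hγval]; exact hesum.trans hsplit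
      have hkey : (1 - e β) • β = c • α + ∑ u ∈ S.erase β, e u • u := by
        linear_combination (norm := module) h1
      by_cases heβ : e β < 1
      · apply hmin β hβS
        have hne1 : (1:ℝ) - e β ≠ 0 := by linarith
        have hinvpos : (0:ℝ) ≤ ((1:ℝ) - e β)⁻¹ := le_of_lt (inv_pos.mpr (by linarith))
        refine ⟨fun u => ((1:ℝ) - e β)⁻¹ * (e u + if u = α then c else 0), ?_, ?_⟩
        · intro u hu
          apply mul_nonneg hinvpos
          have h3 := he0 u (Finset.mem_of_mem_erase hu)
          have : (0:ℝ) ≤ (if u = α then c else 0) := by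
            split
            · exact le_of_lt hcpos
            · exact le_refl 0
          linarith
        · have h5 : ∀ u ∈ S.erase β, (((1:ℝ) - e β)⁻¹ * (e u + if u = α then c else 0)) • u
              = ((1:ℝ) - e β)⁻¹ • (e u • u + (if u = α then c • u else 0)) := by
            intro u _
            by_cases h : u = α
            · rw [if_pos h, if_pos h, ← add_smul, smul_smul]
            · rw [if_neg h, if_neg h, add_zero, add_zero, smul_smul]
          rw [Finset.sum_congr rfl h5, ← Finset.smul_sum, Finset.sum_add_distrib,
              Finset.sum_ite_eq' _ α _, if_pos hαerase,
              add_comm (∑ u ∈ S.erase β, e u • u) (c • α), ← hkey, smul_smul,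
              inv_mul_cancel₀ hne1, one_smul]
      · push_neg at heβ
        have hpair := congrArg (fun v => ⟪x, v⟫) hkey
        simp only [real_inner_smul_right, inner_add_right, inner_sum] at hpair
        have hsum0 : 0 ≤ ∑ u ∈ S.erase β, e u * ⟪x, u⟫ := by
          apply Finset.sum_nonneg
          intro u hu
          exact mul_nonneg (he0 _ (Finset.mem_of_mem_erase hu))
            (le_of_lt (hQS.1 u (Finset.mem_of_mem_erase hu)).2)
        have h6 : (1 - e β) * ⟪x, β⟫ ≤ 0 := by nlinarith
        have h7 : 0 < c * ⟪x, α⟫ := mul_pos hcpos hαx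
        linarith
  -- independence
  have hind : ∀ a : V → ℝ, (∑ u ∈ S, a u • u) = 0 → ∀ u ∈ S, a u = 0 := by
    intro a hsum0
    set P := S.filter (fun u => 0 ≤ a u) with hPdef
    set N := S.filter (fun u => ¬ 0 ≤ a u) with hNdef
    have hPN : ∑ u ∈ P, a u • u + ∑ u ∈ N, a u • u = 0 := by
      rw [hPdef, hNdef, Finset.sum_filter_add_sum_filter_not]
      exact hsum0
    have hzN : ∑ u ∈ P, a u • u = ∑ u ∈ N, (-(a u)) • u := by
      have h8 : ∑ u ∈ N, (-(a u)) • u = - ∑ u ∈ N, a u • u := by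
        rw [← Finset.sum_neg_distrib]
        exact Finset.sum_congr rfl fun u _ => neg_smul _ _
      rw [h8]
      exact eq_neg_of_add_eq_zero_left hPN
    have hmemP : ∀ u ∈ P, 0 ≤ a u := fun u hu => (Finset.mem_filter.mp hu).2
    have hmemN : ∀ u ∈ N, a u < 0 := fun u hu => lt_of_not_ge (Finset.mem_filter.mp hu).2
    have hPS : ∀ u ∈ P, u ∈ S := fun u hu => (Finset.mem_filter.mp hu).1
    have hNS : ∀ u ∈ N, u ∈ S := fun u hu => (Finset.mem_filter.mp hu).1
    have hzz : ⟪∑ u ∈ P, a u • u, ∑ u ∈ P, a u • u⟫ ≤ 0 := by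
      have h9 : ⟪∑ u ∈ P, a u • u, ∑ u ∈ P, a u • u⟫
          = ∑ u ∈ P, ∑ w ∈ N, (a u * (-(a w))) * ⟪u, w⟫ := by
        nth_rewrite 2 [hzN]
        rw [sum_inner]
        apply Finset.sum_congr rfl
        intro u hu
        rw [real_inner_smul_left, inner_sum, Finset.mul_sum]
        apply Finset.sum_congr rfl
        intro w hw
        rw [real_inner_smul_right]
        ring
      rw [h9]
      apply Finset.sum_nonpos
      intro u hu
      apply Finset.sum_nonpos
      intro w hw
      have h10 : u ≠ w := by
        intro he
        subst he
        exact absurd (hmemP u hu) (not_le_of_gt (hmemN u hw))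
      have h11 : ⟪u, w⟫ ≤ 0 := hobt u (hPS u hu) w (hNS w hw) h10
      have h12 : 0 ≤ a u * (-(a w)) := mul_nonneg (hmemP u hu) (by linarith [hmemN w hw])
      have h13 := mul_nonneg h12 (neg_nonneg.mpr h11)
      nlinarith [h13]
    have hz0 : ∑ u ∈ P, a u • u = 0 := by
      rwa [real_inner_self_nonpos] at hzz
    have hxP : ∑ u ∈ P, a u * ⟪x, u⟫ = 0 := by
      have h14 := congrArg (fun v => (⟪x, v⟫ : ℝ)) hz0
      simpa [inner_sum, real_inner_smul_right] using h14
    have hxN : ∑ u ∈ N, (-(a u)) * ⟪x, u⟫ = 0 := by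
      have h13 : ∑ u ∈ N, (-(a u)) • u = 0 := by rw [← hzN]; exact hz0
      have h14 := congrArg (fun v => (⟪x, v⟫ : ℝ)) h13
      simpa [inner_sum, real_inner_smul_right] using h14
    intro u huS
    by_cases hu : 0 ≤ a u
    · have huP : u ∈ P := Finset.mem_filter.mpr ⟨huS, hu⟩
      have hnn : ∀ w ∈ P, 0 ≤ a w * ⟪x, w⟫ := fun w hw =>
        mul_nonneg (hmemP w hw) (le_of_lt (hQS.1 w (hPS w hw)).2)
      have hall := (Finset.sum_eq_zero_iff_of_nonneg hnn).mp hxP u huP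
      have hxu : 0 < ⟪x, u⟫ := (hQS.1 u huS).2
      rcases mul_eq_zero.mp hall with h | h
      · exact h
      · exact absurd h (ne_of_gt hxu)
    · exfalso
      have huN : u ∈ N := Finset.mem_filter.mpr ⟨huS, hu⟩
      have hnn : ∀ w ∈ N, 0 ≤ (-(a w)) * ⟪x, w⟫ := fun w hw =>
        mul_nonneg (by linarith [hmemN w hw]) (le_of_lt (hQS.1 w (hNS w hw)).2)
      have hall := (Finset.sum_eq_zero_iff_of_nonneg hnn).mp hxN u huN
      have hxu : 0 < ⟪x, u⟫ := (hQS.1 u huS).2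
      have hau : a u < 0 := hmemN u huN
      rcases mul_eq_zero.mp hall with h | h
      · linarith
      · linarith
  exact ⟨S, hQS.1, hQS.2, hind⟩

end AuxSimpleSystem

section AuxKeyLemma

set_option linter.unusedSectionVars false
set_option maxHeartbeats 1000000

open RealInnerProductSpace Finset

lemma exists_list_of_mem_closure' {G : Type*} [Group G] {T : Set G} (hT : ∀ s ∈ T, s⁻¹ ∈ T)
    {g : G} (hg : g ∈ Subgroup.closure T) :
    ∃ l : List G, (∀ s ∈ l, s ∈ T) ∧ l.prod = g := by
  induction hg using Subgroup.closure_induction with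
  | mem y hy => exact ⟨[y], by simpa using hy, by simp⟩
  | one => exact ⟨[], by simp, rfl⟩
  | mul y z _ _ ihy ihz =>
    obtain ⟨l1, h1, e1⟩ := ihy
    obtain ⟨l2, h2, e2⟩ := ihz
    refine ⟨l1 ++ l2, ?_, by rw [List.prod_append, e1, e2]⟩
    intro s hs
    rcases List.mem_append.mp hs with h | h
    exacts [h1 s h, h2 s h]
  | inv y _ ihy =>
    obtain ⟨l1, h1, e1⟩ := ihy
    refine ⟨(l1.map fun x => x⁻¹).reverse, ?_, ?_⟩
    · intro s hs
      rw [List.mem_reverse, List.mem_map] at hs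
      obtain ⟨a, ha, rfl⟩ := hs
      exact hT a (h1 a ha)
    · rw [← e1]
      exact (List.prod_inv_reverse l1).symm

variable {V : Type*} [NormedAddCommGroup V] [InnerProductSpace ℝ V] [FiniteDimensional ℝ V]
variable {Φ : Set V} {x : V}

lemma key_pos (hnz : ∀ α ∈ Φ, α ≠ 0)
    (hinv : ∀ g ∈ Subgroup.closure (rootReflection '' Φ), ∀ α ∈ Φ, g α ∈ Φ)
    (hx : ∀ α ∈ Φ, ⟪x, α⟫ ≠ 0)
    {Δ : Finset V} (hsub : ∀ δ ∈ Δ, δ ∈ Φ ∧ 0 < ⟪x, δ⟫)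
    (hgen : ∀ β ∈ Φ, 0 < ⟪x, β⟫ → coneF Δ β)
    (hind : ∀ a : V → ℝ, (∑ u ∈ Δ, a u • u) = 0 → ∀ u ∈ Δ, a u = 0)
    {δ : V} (hδ : δ ∈ Δ) {β : V} (hβ : β ∈ Φ) (hβpos : 0 < ⟪x, β⟫)
    (hnp : ∀ r : ℝ, β ≠ r • δ) :
    rootReflection δ β ∈ Φ ∧ 0 < ⟪x, rootReflection δ β⟫ := by
  classical
  obtain ⟨hδΦ, hδx⟩ := hsub δ hδ
  have hγΦ : rootReflection δ β ∈ Φ := hinv _ (rootReflection_mem_closure hδΦ) β hβ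
  refine ⟨hγΦ, ?_⟩
  rcases lt_or_gt_of_ne (hx _ hγΦ) with hneg | hpos
  · exfalso
    set c : ℝ := 2 * ⟪δ, β⟫ / ‖δ‖ ^ 2 with hc
    have hγval : rootReflection δ β = β - c • δ := rootReflection_apply' δ β
    have hγ'Φ : -(rootReflection δ β) ∈ Φ := neg_mem_roots hnz hinv hγΦ
    have hγ'pos : 0 < ⟪x, -(rootReflection δ β)⟫ := by rw [inner_neg_right]; linarith
    obtain ⟨e, he0, hesum⟩ := hgen β hβ hβpos
    obtain ⟨f, hf0, hfsum⟩ := hgen _ hγ'Φ hγ'pos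
    have hsum : ∑ u ∈ Δ, (e u + f u) • u = c • δ := by
      have h1 : β + -(rootReflection δ β) = c • δ := by rw [hγval]; module
      rw [← h1, hfsum, hesum, ← Finset.sum_add_distrib]
      exact Finset.sum_congr rfl fun u _ => add_smul _ _ _
    have hzero : ∑ u ∈ Δ, ((e u + f u) - if u = δ then c else 0) • u = 0 := by
      have h2 : ∑ u ∈ Δ, (if u = δ then c else 0) • u = c • δ := by
        have h3 : ∀ u ∈ Δ, (if u = δ then c else 0) • u = (if u = δ then c • u else 0) := by
          intro u _; split <;> simp
        rw [Finset.sum_congr rfl h3, Finset.sum_ite_eq' _ δ _, if_pos hδ]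
      have h4 : ∀ u ∈ Δ, ((e u + f u) - if u = δ then c else 0) • u
          = (e u + f u) • u - (if u = δ then c else 0) • u := fun u _ => sub_smul _ _ _
      rw [Finset.sum_congr rfl h4, Finset.sum_sub_distrib, hsum, h2, sub_self]
    have hcoef := hind _ hzero
    have heu : ∀ u ∈ Δ, u ≠ δ → e u = 0 := by
      intro u hu hune
      have h5 := hcoef u hu
      rw [if_neg hune, sub_zero] at h5
      have h6 := he0 u hu
      have h7 := hf0 u hu
      linarith
    have hβeq : β = e δ • δ := by
      rw [hesum]
      apply Finset.sum_eq_single_of_mem δ hδ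
      intro u hu hune
      rw [heu u hu hune, zero_smul]
    exact hnp (e δ) hβeq
  · exact hpos

lemma rootReflection_mem_simple_closure (hfin : Φ.Finite) (hnz : ∀ α ∈ Φ, α ≠ 0)
    (hinv : ∀ g ∈ Subgroup.closure (rootReflection '' Φ), ∀ α ∈ Φ, g α ∈ Φ)
    (hx : ∀ α ∈ Φ, ⟪x, α⟫ ≠ 0)
    {Δ : Finset V} (hsub : ∀ δ ∈ Δ, δ ∈ Φ ∧ 0 < ⟪x, δ⟫)
    (hgen : ∀ β ∈ Φ, 0 < ⟪x, β⟫ → coneF Δ β)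
    (hind : ∀ a : V → ℝ, (∑ u ∈ Δ, a u • u) = 0 → ∀ u ∈ Δ, a u = 0) :
    ∀ β ∈ Φ, 0 < ⟪x, β⟫ →
      rootReflection β ∈ Subgroup.closure (rootReflection '' (↑Δ : Set V)) := by
  classical
  set μ : V → ℕ :=
    fun β => (hfin.toFinset.filter (fun v => 0 < ⟪x, v⟫ ∧ ⟪x, v⟫ < ⟪x, β⟫)).card with hμ
  suffices H : ∀ n, ∀ β ∈ Φ, 0 < ⟪x, β⟫ → μ β = n →
      rootReflection β ∈ Subgroup.closure (rootReflection '' (↑Δ : Set V)) by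
    intro β hβ hpos
    exact H (μ β) β hβ hpos rfl
  intro n
  induction n using Nat.strong_induction_on with
  | _ n ih =>
  intro β hβ hpos hn
  by_cases hprop : ∃ δ ∈ Δ, ∃ r : ℝ, β = r • δ
  · obtain ⟨δ, hδ, r, rfl⟩ := hprop
    have hr0 : r ≠ 0 := by
      intro h0
      rw [h0, zero_smul] at hβ
      exact hnz 0 hβ rfl
    rw [rootReflection_smul δ r hr0]
    exact Subgroup.subset_closure ⟨δ, hδ, rfl⟩
  · push_neg at hprop
    obtain ⟨e, he0, hesum⟩ := hgen β hβ hpos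
    have hββ : 0 < ⟪β, β⟫ := by
      rw [real_inner_self_eq_norm_sq]
      have := norm_ne_zero_iff.mpr (hnz β hβ)
      positivity
    have hexists : ∃ δ ∈ Δ, 0 < ⟪β, δ⟫ := by
      by_contra hno
      push_neg at hno
      have h7 : (⟪β, β⟫ : ℝ) = ∑ u ∈ Δ, e u * ⟪β, u⟫ := by
        have h8 : (⟪β, β⟫ : ℝ) = ⟪β, ∑ u ∈ Δ, e u • u⟫ := by rw [← hesum]
        rw [h8, inner_sum]
        exact Finset.sum_congr rfl fun u _ => real_inner_smul_right _ _ _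
      have h9 : (⟪β, β⟫ : ℝ) ≤ 0 := by
        rw [h7]
        apply Finset.sum_nonpos
        intro u hu
        exact mul_nonpos_iff.mpr (Or.inl ⟨he0 u hu, hno u hu⟩)
      linarith
    obtain ⟨δ, hδ, hβδ⟩ := hexists
    obtain ⟨hδΦ, hδx⟩ := hsub δ hδ
    have hδ0 : δ ≠ 0 := hnz δ hδΦ
    have hnp : ∀ r : ℝ, β ≠ r • δ := fun r => hprop δ hδ r
    obtain ⟨hγΦ, hγpos⟩ := key_pos hnz hinv hx hsub hgen hind hδ hβ hpos hnp
    have hγval : rootReflection δ β = β - (2 * ⟪δ, β⟫ / ‖δ‖ ^ 2) • δ :=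
      rootReflection_apply' δ β
    have hcpos : 0 < 2 * ⟪δ, β⟫ / ‖δ‖ ^ 2 := by
      have h10 : (0:ℝ) < ‖δ‖ ^ 2 := by
        have := norm_ne_zero_iff.mpr hδ0
        positivity
      have h8 : 0 < ⟪δ, β⟫ := by rw [real_inner_comm]; exact hβδ
      positivity
    have hlt : ⟪x, rootReflection δ β⟫ < ⟪x, β⟫ := by
      rw [hγval, inner_sub_right, real_inner_smul_right]
      nlinarith [mul_pos hcpos hδx]
    have hμlt : μ (rootReflection δ β) < μ β := by
      apply Finset.card_lt_card
      rw [Finset.ssubset_iff_of_subset]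
      · refine ⟨rootReflection δ β, ?_, ?_⟩
        · rw [Finset.mem_filter, Set.Finite.mem_toFinset]
          exact ⟨hγΦ, hγpos, hlt⟩
        · rw [Finset.mem_filter]
          push_neg
          intro _ _
          exact le_refl _
      · intro v hv
        rw [Finset.mem_filter] at hv ⊢
        exact ⟨hv.1, hv.2.1, lt_trans hv.2.2 hlt⟩
    have hγmem := ih (μ (rootReflection δ β)) (by omega) (rootReflection δ β) hγΦ hγpos rfl
    have hβγ : β = rootReflection δ (rootReflection δ β) := by
      rw [← mul_apply', rootReflection_mul_self]
      rfl
    rw [hβγ, rootReflection_conj]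
    exact mul_mem (mul_mem (Subgroup.subset_closure ⟨δ, hδ, rfl⟩) hγmem)
      (inv_mem (Subgroup.subset_closure ⟨δ, hδ, rfl⟩))

end AuxKeyLemma

section AuxStab

set_option linter.unusedSectionVars false
set_option maxHeartbeats 1000000

open RealInnerProductSpace Finset

variable {V : Type*} [NormedAddCommGroup V] [InnerProductSpace ℝ V] [FiniteDimensional ℝ V]
variable {Φ : Set V} {x : V}

lemma exchange (hnz : ∀ α ∈ Φ, α ≠ 0)
    (hinv : ∀ g ∈ Subgroup.closure (rootReflection '' Φ), ∀ α ∈ Φ, g α ∈ Φ)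
    (hx : ∀ α ∈ Φ, ⟪x, α⟫ ≠ 0)
    {Δ : Finset V} (hsub : ∀ δ ∈ Δ, δ ∈ Φ ∧ 0 < ⟪x, δ⟫)
    (hgen : ∀ β ∈ Φ, 0 < ⟪x, β⟫ → coneF Δ β)
    (hind : ∀ a : V → ℝ, (∑ u ∈ Δ, a u • u) = 0 → ∀ u ∈ Δ, a u = 0) :
    ∀ l : List (V ≃ₗᵢ[ℝ] V), (∀ s ∈ l, ∃ δ' ∈ Δ, s = rootReflection δ') →
    ∀ δ ∈ Δ, ⟪x, l.prod δ⟫ < 0 →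
    ∃ l' : List (V ≃ₗᵢ[ℝ] V), (∀ s ∈ l', ∃ δ' ∈ Δ, s = rootReflection δ') ∧
      l'.prod = l.prod * rootReflection δ ∧ l'.length + 1 = l.length := by
  intro l
  induction l with
  | nil =>
    intro _ δ hδ hneg
    exfalso
    have h1 := (hsub δ hδ).2
    simp only [List.prod_nil] at hneg
    have h2 : (1 : V ≃ₗᵢ[ℝ] V) δ = δ := rfl
    rw [h2] at hneg
    linarith
  | cons s l₀ ih =>
    intro hl δ hδ hneg
    obtain ⟨ε, hε, hseq⟩ := hl s List.mem_cons_self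
    subst hseq
    have hl₀ : ∀ s' ∈ l₀, ∃ δ' ∈ Δ, s' = rootReflection δ' :=
      fun s' hs' => hl s' (List.mem_cons_of_mem _ hs')
    have hprodW : l₀.prod ∈ Subgroup.closure (rootReflection '' Φ) := by
      apply Subgroup.list_prod_mem
      intro g hg
      obtain ⟨δ', hδ', rfl⟩ := hl₀ g hg
      exact rootReflection_mem_closure (hsub δ' hδ').1
    have hγΦ : l₀.prod δ ∈ Φ := hinv _ hprodW δ (hsub δ hδ).1
    rcases lt_or_gt_of_ne (hx _ hγΦ) with hneg' | hpos'
    · obtain ⟨l', h1, h2, h3⟩ := ih hl₀ δ hδ hneg'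
      refine ⟨rootReflection ε :: l', ?_, ?_, ?_⟩
      · intro s' hs'
        rcases List.mem_cons.mp hs' with rfl | hs'
        · exact ⟨ε, hε, rfl⟩
        · exact h1 s' hs'
      · rw [List.prod_cons, h2, List.prod_cons, mul_assoc]
      · simp only [List.length_cons]
        omega
    · have hnp : ¬ (∀ r : ℝ, l₀.prod δ ≠ r • ε) := by
        intro hnp
        obtain ⟨_, hp⟩ := key_pos hnz hinv hx hsub hgen hind hε hγΦ hpos' hnp
        have heq : (rootReflection ε :: l₀).prod δ = rootReflection ε (l₀.prod δ) := by
          rw [List.prod_cons, mul_apply']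
        rw [heq] at hneg
        linarith
      push_neg at hnp
      obtain ⟨r, hr⟩ := hnp
      have hr0 : r ≠ 0 := by
        intro h0
        rw [h0, zero_smul] at hr
        exact hnz _ hγΦ hr
      have hteq : rootReflection (l₀.prod δ) = rootReflection ε := by
        rw [hr, rootReflection_smul ε r hr0]
      have hconj : rootReflection (l₀.prod δ) = l₀.prod * rootReflection δ * (l₀.prod)⁻¹ :=
        rootReflection_conj _ δ
      refine ⟨l₀, hl₀, ?_, by simp⟩
      have hsimp : ((l₀.prod * rootReflection δ * (l₀.prod)⁻¹) * l₀.prod) * rootReflection δ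
          = l₀.prod := by
        rw [mul_assoc (l₀.prod * rootReflection δ) (l₀.prod)⁻¹ l₀.prod, inv_mul_cancel, mul_one,
            mul_assoc, rootReflection_mul_self, mul_one]
      rw [List.prod_cons, ← hteq, hconj]
      exact hsimp.symm

lemma stab_eq_one (hfin : Φ.Finite) (hnz : ∀ α ∈ Φ, α ≠ 0)
    (hinv : ∀ g ∈ Subgroup.closure (rootReflection '' Φ), ∀ α ∈ Φ, g α ∈ Φ)
    (hx : ∀ α ∈ Φ, ⟪x, α⟫ ≠ 0)
    {g : V ≃ₗᵢ[ℝ] V} (hg : g ∈ Subgroup.closure (rootReflection '' Φ))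
    (hgx : g x = x) : g = 1 := by
  classical
  obtain ⟨Δ, hsub, hgen, hind⟩ := exists_simple_system hfin hnz hinv hx
  have hsimple : Subgroup.closure (rootReflection '' Φ) ≤
      Subgroup.closure (rootReflection '' (↑Δ : Set V)) := by
    rw [Subgroup.closure_le]
    rintro _ ⟨β, hβ, rfl⟩
    rcases lt_or_gt_of_ne (hx β hβ) with hneg | hpos
    · have h1 : -β ∈ Φ := neg_mem_roots hnz hinv hβ
      have h2 : 0 < ⟪x, -β⟫ := by rw [inner_neg_right]; linarith
      have h3 := rootReflection_mem_simple_closure hfin hnz hinv hx hsub hgen hind (-β) h1 h2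
      have h4 : rootReflection β = rootReflection (-β) := by
        rw [show (-β) = (-1 : ℝ) • β by module, rootReflection_smul β (-1) (by norm_num)]
      rw [SetLike.mem_coe]
      rw [h4]
      exact h3
    · rw [SetLike.mem_coe]
      exact rootReflection_mem_simple_closure hfin hnz hinv hx hsub hgen hind β hβ hpos
  have hg' : g ∈ Subgroup.closure (rootReflection '' (↑Δ : Set V)) := hsimple hg
  have hsymm : ∀ s ∈ rootReflection '' (↑Δ : Set V), s⁻¹ ∈ rootReflection '' (↑Δ : Set V) := by
    rintro _ ⟨δ, hδ, rfl⟩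
    rw [rootReflection_inv]
    exact ⟨δ, hδ, rfl⟩
  obtain ⟨l, hlmem, hlprod⟩ := exists_list_of_mem_closure' hsymm hg'
  set Sn : Set ℕ := {n | ∃ l : List (V ≃ₗᵢ[ℝ] V),
    (∀ s ∈ l, ∃ δ ∈ Δ, s = rootReflection δ) ∧ l.prod = g ∧ l.length = n} with hSn
  have hSne : Sn.Nonempty := by
    refine ⟨l.length, l, ?_, hlprod, rfl⟩
    intro s hs
    obtain ⟨δ, hδ, h⟩ := hlmem s hs
    exact ⟨δ, hδ, h.symm⟩
  obtain ⟨lm, hlm, hlmprod, hlmlen⟩ := Nat.sInf_mem hSne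
  by_cases h0 : sInf Sn = 0
  · rw [h0] at hlmlen
    have hnil : lm = [] := List.length_eq_zero_iff.mp hlmlen
    rw [hnil] at hlmprod
    simpa using hlmprod.symm
  · exfalso
    have hlen : lm ≠ [] := by
      intro h
      rw [h] at hlmlen
      simp at hlmlen
      omega
    obtain ⟨l₀, a, hconcat⟩ : ∃ L b, lm = L ++ [b] := (List.eq_nil_or_concat' lm).resolve_left hlen
    subst hconcat
    obtain ⟨δ, hδ, hseq⟩ := hlm a (by simp)
    subst hseq
    have hl₀ : ∀ s ∈ l₀, ∃ δ' ∈ Δ, s = rootReflection δ' := fun s hs => hlm s (by simp [hs])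
    have hprodW : l₀.prod ∈ Subgroup.closure (rootReflection '' Φ) := by
      apply Subgroup.list_prod_mem
      intro g' hg'
      obtain ⟨δ', hδ', rfl⟩ := hl₀ g' hg'
      exact rootReflection_mem_closure (hsub δ' hδ').1
    have hδΦ := (hsub δ hδ).1
    have hγΦ : l₀.prod δ ∈ Φ := hinv _ hprodW δ hδΦ
    have hprodsplit : (l₀ ++ [rootReflection δ]).prod = l₀.prod * rootReflection δ := by
      rw [List.prod_append, List.prod_cons, List.prod_nil, mul_one]
    have hlmlen' : l₀.length + 1 = sInf Sn := by
      rw [← hlmlen]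
      simp
    rcases lt_or_gt_of_ne (hx _ hγΦ) with hneg | hpos
    · obtain ⟨l', h1, h2, h3⟩ := exchange hnz hinv hx hsub hgen hind l₀ hl₀ δ hδ hneg
      have hmem : l'.length ∈ Sn := ⟨l', h1, by rw [h2, ← hprodsplit, hlmprod], rfl⟩
      have hlow := Nat.sInf_le hmem
      omega
    · have happ : ∀ v, g (g⁻¹ v) = v := by
        intro v
        rw [← mul_apply', mul_inv_cancel g]
        rfl
      have hginvx : g⁻¹ x = x := by
        conv_lhs => rw [← hgx]
        rw [← mul_apply', inv_mul_cancel g]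
        rfl
      have hgδ : g δ = -(l₀.prod δ) := by
        rw [← hlmprod, hprodsplit, mul_apply', rootReflection_apply_self δ (hnz δ hδΦ), map_neg]
      have h5 : ⟪x, g δ⟫ < 0 := by rw [hgδ, inner_neg_right]; linarith
      have h6 : ⟪x, g δ⟫ = ⟪x, δ⟫ := by
        calc ⟪x, g δ⟫ = ⟪g (g⁻¹ x), g δ⟫ := by rw [happ]
          _ = ⟪g⁻¹ x, δ⟫ := g.inner_map_map _ _
          _ = ⟪x, δ⟫ := by rw [hginvx]
      have h7 := (hsub δ hδ).2
      linarith

end AuxStab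

section AuxCrux

set_option linter.unusedSectionVars false
set_option maxHeartbeats 1000000

open RealInnerProductSpace Finset

variable {V : Type*} [NormedAddCommGroup V] [InnerProductSpace ℝ V] [FiniteDimensional ℝ V]
variable {Φ : Set V}

lemma exists_generic (hfin : Φ.Finite) {F : Submodule ℝ V}
    (hF : ∀ α ∈ Φ, ∃ v ∈ F, ⟪v, α⟫ ≠ 0) :
    ∃ x ∈ F, ∀ α ∈ Φ, ⟪x, α⟫ ≠ 0 := by
  classical
  have key : ∀ A : Finset V, (↑A ⊆ Φ) → ∃ x ∈ F, ∀ α ∈ A, ⟪x, α⟫ ≠ 0 := by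
    intro A
    induction A using Finset.induction_on with
    | empty => intro _; exact ⟨0, Submodule.zero_mem F, by simp⟩
    | @insert a A ha ih =>
      intro hsub
      have hsubA : (↑A : Set V) ⊆ Φ := by
        intro u hu
        exact hsub (by simp [hu])
      obtain ⟨x0, hx0F, hx0⟩ := ih hsubA
      obtain ⟨y, hyF, hy⟩ := hF a (hsub (by simp))
      by_cases hxa : ⟪x0, a⟫ ≠ 0
      · refine ⟨x0, hx0F, ?_⟩
        intro α hα
        rcases Finset.mem_insert.mp hα with rfl | hα
        exacts [hxa, hx0 α hα]
      · push_neg at hxa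
        set bad : Finset ℝ := {0} ∪ A.image (fun β => - ⟪x0, β⟫ / ⟪y, β⟫) with hbad
        obtain ⟨ε, hε⟩ : ∃ ε : ℝ, ε ∉ bad := Finset.exists_notMem bad
        have hε0 : ε ≠ 0 := by
          intro h
          exact hε (by rw [hbad, h]; simp)
        refine ⟨x0 + ε • y, Submodule.add_mem F hx0F (Submodule.smul_mem F ε hyF), ?_⟩
        intro α hα
        rcases Finset.mem_insert.mp hα with rfl | hα
        · rw [inner_add_left, real_inner_smul_left, hxa, zero_add]
          exact mul_ne_zero hε0 hy
        · intro hcontra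
          rw [inner_add_left, real_inner_smul_left] at hcontra
          by_cases hyβ : ⟪y, α⟫ = 0
          · rw [hyβ, mul_zero, add_zero] at hcontra
            exact hx0 α hα hcontra
          · have hεval : ε = - ⟪x0, α⟫ / ⟪y, α⟫ := by
              field_simp
              linarith
            apply hε
            rw [hbad]
            rw [Finset.mem_union]
            right
            exact Finset.mem_image.mpr ⟨α, hα, hεval.symm⟩
  obtain ⟨x, hxF, hx⟩ := key hfin.toFinset (by simp [Set.Finite.coe_toFinset])
  exact ⟨x, hxF, fun α hα => hx α (hfin.mem_toFinset.mpr hα)⟩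

lemma exists_root_in_movSpace (hfin : Φ.Finite) (hnz : ∀ α ∈ Φ, α ≠ 0)
    (hinv : ∀ g ∈ Subgroup.closure (rootReflection '' Φ), ∀ α ∈ Φ, g α ∈ Φ)
    {w : V ≃ₗᵢ[ℝ] V} (hw : w ∈ Subgroup.closure (rootReflection '' Φ)) (hw1 : w ≠ 1) :
    ∃ α ∈ Φ, α ∈ movSpace w := by
  by_cases hcase : ∃ α ∈ Φ, α ∈ movSpace w
  · exact hcase
  · exfalso
    push_neg at hcase
    have hF : ∀ α ∈ Φ, ∃ v ∈ fixSpace w, ⟪v, α⟫ ≠ 0 := by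
      intro α hα
      by_contra hno
      push_neg at hno
      apply hcase α hα
      rw [movSpace]
      exact ((fixSpace w).mem_orthogonal α).mpr hno
    obtain ⟨x, hxF, hx⟩ := exists_generic hfin hF
    have hwx : w x = x := mem_fixSpace.mp hxF
    exact hw1 (stab_eq_one hfin hnz hinv hx hw hwx)

lemma hard_carter (hfin : Φ.Finite) (hnz : ∀ α ∈ Φ, α ≠ 0)
    (hinv : ∀ g ∈ Subgroup.closure (rootReflection '' Φ), ∀ α ∈ Φ, g α ∈ Φ) :
    ∀ n : ℕ, ∀ w ∈ Subgroup.closure (rootReflection '' Φ), finrank ℝ (movSpace w) ≤ n →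
    ∃ l : List V, (∀ u ∈ l, u ∈ Φ) ∧ (l.map rootReflection).prod = w ∧ l.length ≤ n := by
  intro n
  induction n with
  | zero =>
    intro w _ hdim
    have h0 : finrank ℝ (movSpace w) = 0 := Nat.le_zero.mp hdim
    have hbot : movSpace w = ⊥ := Submodule.finrank_eq_zero.mp h0
    have hw1 : w = 1 := movSpace_eq_bot_iff.mp hbot
    exact ⟨[], by simp, by simp [hw1], by simp⟩
  | succ n ih =>
    intro w hw hdim
    by_cases hw1 : w = 1
    · exact ⟨[], by simp, by simp [hw1], by simp⟩
    · obtain ⟨α, hα, hαmov⟩ := exists_root_in_movSpace hfin hnz hinv hw hw1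
      have hα0 : α ≠ 0 := hnz α hα
      have hlt := finrank_movSpace_reflection_mul_lt α hα0 w hαmov
      have hw' : rootReflection α * w ∈ Subgroup.closure (rootReflection '' Φ) :=
        mul_mem (rootReflection_mem_closure hα) hw
      obtain ⟨l', h1, h2, h3⟩ := ih (rootReflection α * w) hw' (by omega)
      refine ⟨α :: l', ?_, ?_, ?_⟩
      · intro u hu
        rcases List.mem_cons.mp hu with rfl | hu
        exacts [hα, h1 u hu]
      · rw [List.map_cons, List.prod_cons, h2, ← mul_assoc, rootReflection_mul_self, one_mul]
      · simp only [List.length_cons]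
        omega

end AuxCrux

section AuxLength

set_option linter.unusedSectionVars false
set_option maxHeartbeats 1000000

open RealInnerProductSpace Finset

lemma absLength_le_of_list {G : Type*} [Group G] (T : Set G) {l : List G}
    (hl : ∀ s ∈ l, s ∈ T) : absLength T l.prod ≤ l.length :=
  Nat.sInf_le ⟨l, hl, rfl, rfl⟩

lemma absLength_exists_list {G : Type*} [Group G] {T : Set G} {g : G}
    (hne : ∃ l : List G, (∀ s ∈ l, s ∈ T) ∧ l.prod = g) :
    ∃ l : List G, (∀ s ∈ l, s ∈ T) ∧ l.prod = g ∧ l.length = absLength T g := by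
  have hset : {n | ∃ l : List G, (∀ t ∈ l, t ∈ T) ∧ l.prod = g ∧ l.length = n}.Nonempty := by
    obtain ⟨l, h1, h2⟩ := hne
    exact ⟨l.length, l, h1, h2, rfl⟩
  obtain ⟨l, h1, h2, h3⟩ := Nat.sInf_mem hset
  exact ⟨l, h1, h2, h3⟩

lemma absLength_eq_zero_imp {G : Type*} [Group G] {T : Set G} {g : G}
    (hne : ∃ l : List G, (∀ s ∈ l, s ∈ T) ∧ l.prod = g) (h0 : absLength T g = 0) : g = 1 := by
  obtain ⟨l, _, h2, h3⟩ := absLength_exists_list hne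
  rw [h0] at h3
  rw [← h2, List.length_eq_zero_iff.mp h3, List.prod_nil]

lemma prod_map_conj {G : Type*} [Group G] (g : G) (l : List G) :
    (l.map (fun a => g * a * g⁻¹)).prod = g * l.prod * g⁻¹ := by
  induction l with
  | nil => simp
  | cons a l ih =>
    rw [List.map_cons, List.prod_cons, ih, List.prod_cons]
    group

variable {V : Type*} [NormedAddCommGroup V] [InnerProductSpace ℝ V] [FiniteDimensional ℝ V]
variable {Φ : Set V}

lemma symmT : ∀ s ∈ rootReflection '' Φ, s⁻¹ ∈ rootReflection '' Φ := by
  rintro _ ⟨β, hβ, rfl⟩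
  rw [rootReflection_inv]
  exact ⟨β, hβ, rfl⟩

lemma absLength_conj_le
    (hinv : ∀ g ∈ Subgroup.closure (rootReflection '' Φ), ∀ β ∈ Φ, g β ∈ Φ)
    {g w : V ≃ₗᵢ[ℝ] V} (hg : g ∈ Subgroup.closure (rootReflection '' Φ))
    (hw : w ∈ Subgroup.closure (rootReflection '' Φ)) :
    absLength (rootReflection '' Φ) (g * w * g⁻¹) ≤ absLength (rootReflection '' Φ) w := by
  obtain ⟨l, h1, h2, h3⟩ := absLength_exists_list (exists_list_of_mem_closure' symmT hw)
  have hmem : ∀ s ∈ l.map (fun a => g * a * g⁻¹), s ∈ rootReflection '' Φ := by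
    intro s hs
    obtain ⟨a, ha, rfl⟩ := List.mem_map.mp hs
    obtain ⟨β, hβ, rfl⟩ := h1 a ha
    rw [← rootReflection_conj]
    exact ⟨g β, hinv g hg β hβ, rfl⟩
  have hprod : (l.map (fun a => g * a * g⁻¹)).prod = g * w * g⁻¹ := by
    rw [prod_map_conj, h2]
  calc absLength (rootReflection '' Φ) (g * w * g⁻¹)
      ≤ (l.map (fun a => g * a * g⁻¹)).length := by
        rw [← hprod]; exact absLength_le_of_list _ hmem
    _ = l.length := List.length_map _
    _ = absLength (rootReflection '' Φ) w := h3

lemma absLength_conj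
    (hinv : ∀ g ∈ Subgroup.closure (rootReflection '' Φ), ∀ β ∈ Φ, g β ∈ Φ)
    {g w : V ≃ₗᵢ[ℝ] V} (hg : g ∈ Subgroup.closure (rootReflection '' Φ))
    (hw : w ∈ Subgroup.closure (rootReflection '' Φ)) :
    absLength (rootReflection '' Φ) (g * w * g⁻¹) = absLength (rootReflection '' Φ) w := by
  apply le_antisymm (absLength_conj_le hinv hg hw)
  have h1 := absLength_conj_le hinv (inv_mem hg) (mul_mem (mul_mem hg hw) (inv_mem hg))
  have h2 : g⁻¹ * (g * w * g⁻¹) * g⁻¹⁻¹ = w := by group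
  rwa [h2] at h1

lemma exists_root_list {l : List (V ≃ₗᵢ[ℝ] V)} (hl : ∀ s ∈ l, s ∈ rootReflection '' Φ) :
    ∃ lr : List V, (∀ u ∈ lr, u ∈ Φ) ∧ lr.map rootReflection = l := by
  induction l with
  | nil => exact ⟨[], by simp, rfl⟩
  | cons s l ih =>
    obtain ⟨β, hβ, rfl⟩ := hl s List.mem_cons_self
    obtain ⟨lr, h1, h2⟩ := ih (fun s' hs' => hl s' (List.mem_cons_of_mem _ hs'))
    refine ⟨β :: lr, ?_, by rw [List.map_cons, h2]⟩
    intro u hu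
    rcases List.mem_cons.mp hu with rfl | hu
    exacts [hβ, h1 u hu]

lemma exists_ind_list_spanning (Ψ : Set V) :
    ∃ L : List V, Ind L ∧ (∀ u ∈ L, u ∈ Ψ) ∧
      Submodule.span ℝ {u | u ∈ L} = Submodule.span ℝ Ψ := by
  have key : ∀ k : ℕ, ∀ L : List V, Ind L → (∀ u ∈ L, u ∈ Ψ) →
      Submodule.span ℝ {u | u ∈ L} ≤ Submodule.span ℝ Ψ →
      finrank ℝ (Submodule.span ℝ Ψ) ≤ finrank ℝ (Submodule.span ℝ {u | u ∈ L}) + k →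
      ∃ L' : List V, Ind L' ∧ (∀ u ∈ L', u ∈ Ψ) ∧
        Submodule.span ℝ {u | u ∈ L'} = Submodule.span ℝ Ψ := by
    intro k
    induction k with
    | zero =>
      intro L h1 h2 h3 h4
      rw [Nat.add_zero] at h4
      exact ⟨L, h1, h2, Submodule.eq_of_le_of_finrank_le h3 h4⟩
    | succ k ih =>
      intro L h1 h2 h3 h4
      by_cases hcov : ∀ β ∈ Ψ, β ∈ Submodule.span ℝ {u | u ∈ L}
      · have h5 : Submodule.span ℝ Ψ ≤ Submodule.span ℝ {u | u ∈ L} :=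
          Submodule.span_le.mpr hcov
        exact ⟨L, h1, h2, le_antisymm h3 h5⟩
      · push_neg at hcov
        obtain ⟨β, hβΨ, hβns⟩ := hcov
        have hsub : Submodule.span ℝ {u | u ∈ L} ≤ Submodule.span ℝ {u | u ∈ β :: L} :=
          Submodule.span_mono (by intro u hu; simp only [Set.mem_setOf_eq, List.mem_cons] at hu ⊢; exact Or.inr hu)
        have hstep : finrank ℝ (Submodule.span ℝ {u | u ∈ L})
            < finrank ℝ (Submodule.span ℝ {u | u ∈ β :: L}) := by
          apply Submodule.finrank_lt_finrank_of_lt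
          rw [SetLike.lt_iff_le_and_exists]
          refine ⟨hsub, β, ?_, hβns⟩
          exact Submodule.subset_span (by simp)
        apply ih (β :: L) ⟨hβns, h1⟩
        · intro u hu
          rcases List.mem_cons.mp hu with rfl | hu
          exacts [hβΨ, h2 u hu]
        · apply Submodule.span_le.mpr
          intro u hu
          simp only [Set.mem_setOf_eq, List.mem_cons] at hu
          rcases hu with rfl | hu
          · exact Submodule.subset_span hβΨ
          · exact h3 (Submodule.subset_span hu)
        · omega
  apply key (finrank ℝ (Submodule.span ℝ Ψ)) []
  · trivial
  · simp
  · have : {u : V | u ∈ ([] : List V)} = (∅ : Set V) := by ext u; simp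
    rw [this, Submodule.span_empty]
    exact bot_le
  · omega

end AuxLength

set_option maxHeartbeats 1000000 in
open RealInnerProductSpace in
/-- every modular reflection subgroup of a finite Coxeter group `W` is a
parabolic reflection subgroup. -/
theorem modular_reflection_subgroup_is_parabolic
    {V : Type*} [NormedAddCommGroup V] [InnerProductSpace ℝ V] [FiniteDimensional ℝ V]
    (Φ : Set V) (W H : Subgroup (V ≃ₗᵢ[ℝ] V)) (hW : IsRootSystemOf Φ W)
    (hHrefl : IsReflSubgroup Φ H)
    (hHmod : IsModularSubgroupIn (rootReflection '' Φ) H W) :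
    IsParabolicSubgroup Φ H := by
  classical
  intro α hαΦ hαspan
  have hWeq : W = Subgroup.closure (rootReflection '' Φ) := hW.closure_eq
  have hinv : ∀ g ∈ Subgroup.closure (rootReflection '' Φ), ∀ β ∈ Φ, g β ∈ Φ := by
    intro g hg β hβ
    exact hW.invariant g (by rw [hWeq]; exact hg) β hβ
  have hfin := hW.finite_roots
  have hnz := hW.ne_zero
  have hHW : H ≤ W := by
    obtain ⟨R, hRT, hHR⟩ := hHrefl
    rw [hHR, hWeq]
    exact (Subgroup.closure_le _).mpr (hRT.trans Subgroup.subset_closure)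
  have hα0 : α ≠ 0 := hnz α hαΦ
  have htαW : rootReflection α ∈ W := by rw [hWeq]; exact rootReflection_mem_closure hαΦ
  set Ψ : Set V := {β | β ∈ Φ ∧ rootReflection β ∈ H} with hΨ
  obtain ⟨L, hLind, hLmem, hLspan⟩ := exists_ind_list_spanning Ψ
  have hαin : α ∈ Submodule.span ℝ {u | u ∈ L} := by
    rw [hLspan]
    exact hαspan
  set hh : V ≃ₗᵢ[ℝ] V := (L.map rootReflection).prod with hhdef
  have hhH : hh ∈ H := by
    apply Subgroup.list_prod_mem
    intro g hg
    obtain ⟨β, hβ, rfl⟩ := List.mem_map.mp hg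
    exact (hLmem β hβ).2
  have hhWc : hh ∈ Subgroup.closure (rootReflection '' Φ) := by rw [← hWeq]; exact hHW hhH
  have hword : ∀ w : V ≃ₗᵢ[ℝ] V, w ∈ Subgroup.closure (rootReflection '' Φ) →
      ∃ l : List (V ≃ₗᵢ[ℝ] V), (∀ s ∈ l, s ∈ rootReflection '' Φ) ∧ l.prod = w :=
    fun w hw => exists_list_of_mem_closure' symmT hw
  have hLn : finrank ℝ (movSpace hh) = L.length := by
    rw [hhdef, movSpace, fixSpace_prod_of_ind L hLind (fun u hu => hnz u (hLmem u hu).1),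
        Submodule.orthogonal_orthogonal, finrank_span_of_ind L hLind]
  have habs_ge : L.length ≤ absLength (rootReflection '' Φ) hh := by
    obtain ⟨l, h1, h2, h3⟩ := absLength_exists_list (hword hh hhWc)
    obtain ⟨lr, hr1, hr2⟩ := exists_root_list h1
    have hfixle : (Submodule.span ℝ {u | u ∈ lr})ᗮ ≤ fixSpace hh := by
      have h4 := orthogonal_span_le_fixSpace_prod lr
      rwa [hr2, h2] at h4
    have hmovle : movSpace hh ≤ Submodule.span ℝ {u | u ∈ lr} := by
      rw [movSpace]
      have h5 := Submodule.orthogonal_le hfixle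
      rwa [Submodule.orthogonal_orthogonal] at h5
    calc L.length = finrank ℝ (movSpace hh) := hLn.symm
      _ ≤ finrank ℝ (Submodule.span ℝ {u | u ∈ lr}) := Submodule.finrank_mono hmovle
      _ ≤ lr.length := finrank_span_list_le lr
      _ = l.length := by rw [← hr2]; exact (List.length_map _).symm
      _ = absLength (rootReflection '' Φ) hh := h3
  have htαne : rootReflection α ≠ 1 := by
    intro h1
    have h2 : rootReflection α α = α := by rw [h1]; rfl
    rw [rootReflection_apply_self α hα0] at h2
    have h3 : (2:ℝ) • α = 0 := by
      linear_combination (norm := module) (-1 : ℝ) • h2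
    rcases smul_eq_zero.mp h3 with h | h
    · norm_num at h
    · exact hα0 h
  have htα1 : absLength (rootReflection '' Φ) (rootReflection α) = 1 := by
    apply le_antisymm
    · have hl : ∀ s ∈ [rootReflection α], s ∈ rootReflection '' Φ := by
        intro s hs
        simp only [List.mem_singleton] at hs
        subst hs
        exact ⟨α, hαΦ, rfl⟩
      have h6 := absLength_le_of_list _ hl
      simpa using h6
    · by_contra hc
      push_neg at hc
      have h0 : absLength (rootReflection '' Φ) (rootReflection α) = 0 := by omega
      exact htαne (absLength_eq_zero_imp (hword _ (rootReflection_mem_closure hαΦ)) h0)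
  obtain ⟨m, hmH, hmmin⟩ := hHmod (rootReflection α) htαW
  have h1mem : (rootReflection α)⁻¹ * rootReflection α ∈ H := by
    rw [inv_mul_cancel]
    exact one_mem H
  have hm1 := hmmin (rootReflection α) h1mem
  unfold absLe at hm1
  rw [htα1] at hm1
  have hmW : m ∈ W := by
    have h4 : m = rootReflection α * ((rootReflection α)⁻¹ * m) := by group
    rw [h4]
    exact mul_mem htαW (hHW hmH)
  by_cases hm0 : absLength (rootReflection '' Φ) m = 0
  · have hmone : m = 1 := absLength_eq_zero_imp (hword m (by rw [← hWeq]; exact hmW)) hm0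
    rw [hmone, mul_one] at hmH
    have h5 := inv_mem hmH
    rwa [inv_inv] at h5
  · exfalso
    have h5 : absLength (rootReflection '' Φ) (rootReflection α * m⁻¹) = 0 := by omega
    have hWm : rootReflection α * m⁻¹ ∈ Subgroup.closure (rootReflection '' Φ) :=
      mul_mem (rootReflection_mem_closure hαΦ) (inv_mem (by rw [← hWeq]; exact hmW))
    have h6 : rootReflection α * m⁻¹ = 1 := absLength_eq_zero_imp (hword _ hWm) h5
    have hmeq : m = rootReflection α := (mul_inv_eq_one.mp h6).symm
    have huH : (rootReflection α)⁻¹ * (rootReflection α * hh) ∈ H := by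
      rw [← mul_assoc, inv_mul_cancel, one_mul]
      exact hhH
    have hm2 := hmmin (rootReflection α * hh) huH
    rw [hmeq] at hm2
    unfold absLe at hm2
    rw [htα1] at hm2
    have hconj : absLength (rootReflection '' Φ) (rootReflection α * hh * (rootReflection α)⁻¹)
        = absLength (rootReflection '' Φ) hh :=
      absLength_conj hinv (rootReflection_mem_closure hαΦ) hhWc
    rw [hconj] at hm2
    have hfixle2 : (Submodule.span ℝ {u | u ∈ L})ᗮ ≤ fixSpace (rootReflection α * hh) := by
      intro v hv
      have hvh : hh v = v := mem_fixSpace.mp (orthogonal_span_le_fixSpace_prod L hv)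
      rw [mem_fixSpace, mul_apply', hvh]
      apply rootReflection_apply_orthogonal
      exact (Submodule.mem_orthogonal _ v).mp hv α hαin
    have hmovle2 : finrank ℝ (movSpace (rootReflection α * hh)) ≤ L.length := by
      have h7 := Submodule.orthogonal_le hfixle2
      rw [Submodule.orthogonal_orthogonal] at h7
      calc finrank ℝ (movSpace (rootReflection α * hh))
          ≤ finrank ℝ (Submodule.span ℝ {u | u ∈ L}) := Submodule.finrank_mono h7
        _ = L.length := finrank_span_of_ind L hLind
    have hWtah : rootReflection α * hh ∈ Subgroup.closure (rootReflection '' Φ) :=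
      mul_mem (rootReflection_mem_closure hαΦ) hhWc
    obtain ⟨lc, hc1, hc2, hc3⟩ := hard_carter hfin hnz hinv
      (finrank ℝ (movSpace (rootReflection α * hh))) _ hWtah le_rfl
    have hub : absLength (rootReflection '' Φ) (rootReflection α * hh) ≤ L.length := by
      calc absLength (rootReflection '' Φ) (rootReflection α * hh)
          ≤ (lc.map rootReflection).length := by
            rw [← hc2]
            apply absLength_le_of_list
            intro s hs
            obtain ⟨β, hβ, rfl⟩ := List.mem_map.mp hs
            exact ⟨β, hc1 β hβ, rfl⟩
        _ = lc.length := List.length_map _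
        _ ≤ finrank ℝ (movSpace (rootReflection α * hh)) := hc3
        _ ≤ L.length := hmovle2
    omega
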